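/- Let k be a field of characteristic zero, L a finite-dimensional Lie algebra over k, and suppose the dual space L* carries a Lie bracket [·,·]* satisfying the compatibility (1-cocycle) condition: for all X, Y ∈ L and all f, g ∈ L*, [f,g]*([X,Y]) = [f∘ad X, g]*(Y) + [f, g∘ad X]*(Y) − [f∘ad Y, g]*(X) − [f, g∘ad Y]*(X), where (f∘ad X)(Z) = f([X,Z]). Then there exists a unique Lie algebra bracket on the vector space D = L ⊕ L* such that (i) [(X,0),(Y,0)] = ([X,Y],0) for all X,Y ∈ L, (ii) [(0,f),(0,g)] = (0,[f,g]*) for all f,g ∈ L*, and (iii) the symmetric bilinear form ⟨(X,f),(Y,g)⟩ = f(Y) + g(X) is invariant, i.e. ⟨[A,B],C⟩ = ⟨A,[B,C]⟩ for all A, B, C ∈ D. -/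

import Mathlib

open Module LinearMap

set_option linter.unusedSectionVars false
namespace DoubleLieAux

variable {k : Type*} [Field k] {L : Type*} [LieRing L] [LieAlgebra k L]
  [FiniteDimensional k L]

/-- `ad` as a plain linear map on `L`. -/
noncomputable def adL (X : L) : L →ₗ[k] L := (LieAlgebra.ad k L X : L →ₗ[k] L)

@[simp] lemma adL_apply (X Z : L) : (adL X : L →ₗ[k] L) Z = ⁅X, Z⁆ := rfl

lemma comp_adL_apply (f : Module.Dual k L) (X Z : L) :
    (f ∘ₗ (adL X : L →ₗ[k] L)) Z = f ⁅X, Z⁆ := rfl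

lemma adL_add (X Y : L) : (adL (X + Y) : L →ₗ[k] L) = adL X + adL Y := by
  ext z; simp [adL, add_lie]

lemma adL_smul (c : k) (X : L) : (adL (c • X) : L →ₗ[k] L) = c • adL X := by
  ext z; simp [adL, smul_lie]

lemma dual_ext {u v : L} (h : ∀ f : Module.Dual k L, f u = f v) : u = v := by
  apply (Module.evalEquiv k L).injective
  ext f
  simpa [Module.evalEquiv_apply, Module.Dual.eval_apply] using h f

variable (bra : Module.Dual k L →ₗ[k] Module.Dual k L →ₗ[k] Module.Dual k L)

/-- `mu bra g X ∈ L` is the unique element with `h (mu bra g X) = bra g h X`. -/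
noncomputable def mu : Module.Dual k L →ₗ[k] L →ₗ[k] L :=
  LinearMap.mk₂ k
    (fun g X => (Module.evalEquiv k L).symm ((Module.evalEquiv k L X) ∘ₗ bra g))
    (by
      intro g g' X
      have h1 : (Module.evalEquiv k L X) ∘ₗ bra (g + g')
          = (Module.evalEquiv k L X) ∘ₗ bra g + (Module.evalEquiv k L X) ∘ₗ bra g' := by
        ext h; simp
      rw [h1, map_add])
    (by
      intro c g X
      have h1 : (Module.evalEquiv k L X) ∘ₗ bra (c • g)
          = c • ((Module.evalEquiv k L X) ∘ₗ bra g) := by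
        ext h; simp
      rw [h1, map_smul])
    (by
      intro g X X'
      have h1 : (Module.evalEquiv k L (X + X')) ∘ₗ bra g
          = (Module.evalEquiv k L X) ∘ₗ bra g + (Module.evalEquiv k L X') ∘ₗ bra g := by
        ext h; simp
      rw [h1, map_add])
    (by
      intro c g X
      have h1 : (Module.evalEquiv k L (c • X)) ∘ₗ bra g
          = c • ((Module.evalEquiv k L X) ∘ₗ bra g) := by
        ext h; simp
      rw [h1, map_smul])

@[simp] lemma mu_spec (g h : Module.Dual k L) (X : L) :
    h (mu bra g X) = bra g h X := by
  simp [mu, LinearMap.mk₂_apply, Module.apply_evalEquiv_symm_apply,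
    Module.evalEquiv_apply, Module.Dual.eval_apply]


/-- The double bracket. -/
noncomputable def Bmap : (L × Module.Dual k L) →ₗ[k] (L × Module.Dual k L) →ₗ[k] (L × Module.Dual k L) :=
  LinearMap.mk₂ k
    (fun A C => (⁅A.1, C.1⁆ + mu bra C.2 A.1 - mu bra A.2 C.1,
      bra A.2 C.2 - C.2 ∘ₗ (adL A.1 : L →ₗ[k] L) + A.2 ∘ₗ (adL C.1 : L →ₗ[k] L)))
    (by
      intro A A' C
      refine Prod.ext ?_ ?_ <;>
        simp [Prod.fst_add, Prod.snd_add, add_lie, map_add, LinearMap.add_apply,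
          adL_add, LinearMap.comp_add, LinearMap.add_comp] <;> abel)
    (by
      intro c A C
      refine Prod.ext ?_ ?_ <;>
        simp [Prod.smul_fst, Prod.smul_snd, smul_lie, map_smul, LinearMap.smul_apply,
          adL_smul, LinearMap.comp_smul, LinearMap.smul_comp, smul_sub, smul_add])
    (by
      intro A C C'
      refine Prod.ext ?_ ?_ <;>
        simp [Prod.fst_add, Prod.snd_add, lie_add, map_add, LinearMap.add_apply,
          adL_add, LinearMap.comp_add, LinearMap.add_comp] <;> abel)
    (by
      intro c A C
      refine Prod.ext ?_ ?_ <;>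
        simp [Prod.smul_fst, Prod.smul_snd, lie_smul, map_smul, LinearMap.smul_apply,
          adL_smul, LinearMap.comp_smul, LinearMap.smul_comp, smul_sub, smul_add])

lemma Bmap_apply (A C : L × Module.Dual k L) :
    Bmap bra A C = (⁅A.1, C.1⁆ + mu bra C.2 A.1 - mu bra A.2 C.1,
      bra A.2 C.2 - C.2 ∘ₗ (adL A.1 : L →ₗ[k] L) + A.2 ∘ₗ (adL C.1 : L →ₗ[k] L)) := rfl


section Props

variable (bra_antisym : ∀ f : Module.Dual k L, bra f f = 0)

include bra_antisym in
lemma bra_skew (f g : Module.Dual k L) : bra f g = - bra g f := by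
  have h := bra_antisym (f + g)
  simp only [map_add, LinearMap.add_apply, bra_antisym] at h
  linear_combination (norm := module) h

include bra_antisym in
lemma Bmap_antisym (A : L × Module.Dual k L) : Bmap bra A A = 0 := by
  rw [Bmap_apply]
  refine Prod.ext ?_ ?_ <;> simp [bra_antisym]

lemma Bmap_LL (X Y : L) :
    Bmap bra (X, (0 : Module.Dual k L)) (Y, 0) = (⁅X, Y⁆, (0 : Module.Dual k L)) := by
  rw [Bmap_apply]; refine Prod.ext ?_ ?_ <;> simp

lemma Bmap_VV (f g : Module.Dual k L) :
    Bmap bra ((0 : L), f) (0, g) = ((0 : L), bra f g) := by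
  rw [Bmap_apply]; refine Prod.ext ?_ ?_ <;> simp [adL]

include bra_antisym in
lemma Bmap_inv (A C D : L × Module.Dual k L) :
    (Bmap bra A C).2 D.1 + D.2 (Bmap bra A C).1
      = A.2 (Bmap bra C D).1 + (Bmap bra C D).2 A.1 := by
  rw [Bmap_apply, Bmap_apply]
  simp only [LinearMap.sub_apply, LinearMap.add_apply, map_add, map_sub,
    comp_adL_apply, mu_spec]
  rw [bra_skew bra bra_antisym C.2 A.2, bra_skew bra bra_antisym D.2 A.2,
    ← lie_skew C.1 A.1, ← lie_skew D.1 A.1]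
  simp only [LinearMap.neg_apply, map_neg]
  ring

@[simp] lemma adL_zero : (adL (0 : L) : L →ₗ[k] L) = 0 := by
  ext z; simp [adL]

lemma Bmap_LV (X : L) (g : Module.Dual k L) :
    Bmap bra (X, (0 : Module.Dual k L)) ((0 : L), g)
      = (mu bra g X, -(g ∘ₗ (adL X : L →ₗ[k] L))) := by
  rw [Bmap_apply]; refine Prod.ext ?_ ?_ <;> simp

lemma Bmap_VL (f : Module.Dual k L) (Y : L) :
    Bmap bra ((0 : L), f) (Y, (0 : Module.Dual k L))
      = (-(mu bra f Y), f ∘ₗ (adL Y : L →ₗ[k] L)) := by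
  rw [Bmap_apply]; refine Prod.ext ?_ ?_ <;> simp

lemma jLLL (x y z : L) :
    Bmap bra (Bmap bra (x, (0:Module.Dual k L)) (y, 0)) (z, 0)
      + Bmap bra (Bmap bra (y, (0:Module.Dual k L)) (z, 0)) (x, 0)
      + Bmap bra (Bmap bra (z, (0:Module.Dual k L)) (x, 0)) (y, 0) = 0 := by
  rw [Bmap_LL, Bmap_LL, Bmap_LL, Bmap_LL, Bmap_LL, Bmap_LL]
  refine Prod.ext ?_ ?_
  · show ⁅⁅x,y⁆,z⁆ + ⁅⁅y,z⁆,x⁆ + ⁅⁅z,x⁆,y⁆ = 0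
    have h := lie_jacobi x y z
    have e1 := lie_skew z ⁅x,y⁆
    have e2 := lie_skew x ⁅y,z⁆
    have e3 := lie_skew y ⁅z,x⁆
    linear_combination (norm := module) -h - e1 - e2 - e3
  · show (0:Module.Dual k L) + 0 + 0 = 0
    simp

lemma apply_lie_mu (f h : Module.Dual k L) (x y : L) :
    h ⁅(mu bra f y : L), x⁆ = - bra f (h ∘ₗ (adL x : L →ₗ[k] L)) y := by
  rw [← lie_skew, map_neg, ← comp_adL_apply h x, mu_spec]

variable (cocycle' : ∀ (X Y : L) (f g : Module.Dual k L),
      bra f g ⁅X, Y⁆ =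
          bra (f ∘ₗ (adL X : L →ₗ[k] L)) g Y
        + bra f (g ∘ₗ (adL X : L →ₗ[k] L)) Y
        - bra (f ∘ₗ (adL Y : L →ₗ[k] L)) g X
        - bra f (g ∘ₗ (adL Y : L →ₗ[k] L)) X)

include cocycle' in
lemma jLLf (x y : L) (f : Module.Dual k L) :
    Bmap bra (Bmap bra (x, (0:Module.Dual k L)) (y, 0)) ((0:L), f)
      + Bmap bra (Bmap bra (y, (0:Module.Dual k L)) ((0:L), f)) (x, 0)
      + Bmap bra (Bmap bra ((0:L), f) (x, (0:Module.Dual k L))) (y, 0) = 0 := by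
  rw [Bmap_LL, Bmap_LV, Bmap_VL, Bmap_LV, Bmap_apply, Bmap_apply]
  refine Prod.ext ?_ ?_
  · simp only [Prod.fst_add, Prod.snd_add, map_zero, map_neg, neg_lie,
      LinearMap.zero_apply, sub_neg_eq_add]
    apply dual_ext (k := k)
    intro h
    simp only [map_add, map_sub, map_neg, mu_spec, apply_lie_mu,
      LinearMap.neg_apply, Prod.fst_zero, map_zero]
    linear_combination cocycle' x y f h
  · simp only [Prod.fst_add, Prod.snd_add, map_zero, map_neg, neg_lie,
      LinearMap.zero_comp, LinearMap.neg_comp, LinearMap.comp_zero, zero_sub,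
      sub_zero, add_zero, zero_add, Prod.snd_zero]
    ext z
    simp only [LinearMap.add_apply, LinearMap.neg_apply, LinearMap.zero_apply,
      comp_adL_apply, LinearMap.coe_comp, Function.comp_apply, adL_apply, lie_lie,
      map_sub]
    ring

variable (bra_jac : ∀ f g h : Module.Dual k L,
      bra (bra f g) h + bra (bra g h) f + bra (bra h f) g = 0)

include bra_jac in
lemma jfff (f g h : Module.Dual k L) :
    Bmap bra (Bmap bra ((0:L), f) ((0:L), g)) ((0:L), h)
      + Bmap bra (Bmap bra ((0:L), g) ((0:L), h)) ((0:L), f)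
      + Bmap bra (Bmap bra ((0:L), h) ((0:L), f)) ((0:L), g) = 0 := by
  rw [Bmap_VV, Bmap_VV, Bmap_VV, Bmap_VV, Bmap_VV, Bmap_VV]
  refine Prod.ext ?_ ?_
  · simp
  · simpa using bra_jac f g h

include bra_antisym cocycle' bra_jac in
lemma jLff (x : L) (f g : Module.Dual k L) :
    Bmap bra (Bmap bra (x, (0:Module.Dual k L)) ((0:L), f)) ((0:L), g)
      + Bmap bra (Bmap bra ((0:L), f) ((0:L), g)) (x, (0:Module.Dual k L))
      + Bmap bra (Bmap bra ((0:L), g) (x, (0:Module.Dual k L))) ((0:L), f) = 0 := by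
  rw [Bmap_LV, Bmap_VV, Bmap_VL, Bmap_VL, Bmap_apply, Bmap_apply]
  refine Prod.ext ?_ ?_
  · simp only [Prod.fst_add, Prod.snd_add, map_zero, map_neg, neg_lie, lie_zero,
      zero_lie, LinearMap.zero_apply, LinearMap.neg_apply, Prod.fst_zero,
      zero_add, add_zero, sub_zero, zero_sub, sub_neg_eq_add]
    apply dual_ext (k := k)
    intro h
    simp only [map_add, map_sub, map_neg, mu_spec]
    have j := DFunLike.congr_fun (bra_jac f g h) x
    simp only [LinearMap.add_apply, LinearMap.zero_apply] at j
    have s1 := DFunLike.congr_fun (bra_skew bra bra_antisym f (bra g h)) x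
    have s2 := DFunLike.congr_fun (bra_skew bra bra_antisym g (bra f h)) x
    have s3 : bra (bra f h) g x = -(bra (bra h f) g x) := by
      rw [bra_skew bra bra_antisym f h]; simp
    simp only [LinearMap.neg_apply] at s1 s2
    simp only [Prod.fst_zero, map_zero]
    linear_combination -j + s1 - s2 + s3
  · simp only [Prod.fst_add, Prod.snd_add, map_zero, map_neg, neg_lie, lie_zero,
      zero_lie, Prod.snd_zero, LinearMap.zero_comp, LinearMap.comp_zero,
      LinearMap.neg_comp, adL_zero, zero_add, add_zero, sub_zero, zero_sub]
    ext z
    simp only [LinearMap.add_apply, LinearMap.sub_apply, LinearMap.neg_apply,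
      LinearMap.zero_apply, comp_adL_apply, neg_lie, map_neg, apply_lie_mu]
    have s1 : bra (g ∘ₗ (adL x : L →ₗ[k] L)) f z
        = -(bra f (g ∘ₗ (adL x : L →ₗ[k] L)) z) := by
      rw [bra_skew bra bra_antisym]; simp
    have s2 : bra g (f ∘ₗ (adL z : L →ₗ[k] L)) x
        = -(bra (f ∘ₗ (adL z : L →ₗ[k] L)) g x) := by
      rw [bra_skew bra bra_antisym]; simp
    linear_combination cocycle' x z f g + s1 - s2

include bra_antisym in
lemma Bmap_skew (A C : L × Module.Dual k L) : Bmap bra A C = - Bmap bra C A := by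
  have h := Bmap_antisym bra bra_antisym (A + C)
  simp only [map_add, LinearMap.add_apply, Bmap_antisym bra bra_antisym] at h
  linear_combination (norm := module) h

include bra_antisym cocycle' bra_jac in
lemma Bmap_jacobi (A C D : L × Module.Dual k L) :
    Bmap bra (Bmap bra A C) D + Bmap bra (Bmap bra C D) A
      + Bmap bra (Bmap bra D A) C = 0 := by
  let J : (L × Module.Dual k L) → (L × Module.Dual k L) → (L × Module.Dual k L)
      → (L × Module.Dual k L) := fun A C D =>
    Bmap bra (Bmap bra A C) D + Bmap bra (Bmap bra C D) A + Bmap bra (Bmap bra D A) C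
  show J A C D = 0
  have cyc : ∀ A C D, J A C D = J C D A := by
    intro A C D; show _ = _; simp only [J]; abel
  have addl : ∀ A A' C D, J (A + A') C D = J A C D + J A' C D := by
    intro A A' C D; simp only [J, map_add, LinearMap.add_apply]; abel
  have addm : ∀ A C C' D, J A (C + C') D = J A C D + J A C' D := by
    intro A C C' D; simp only [J, map_add, LinearMap.add_apply]; abel
  have addr : ∀ A C D D', J A C (D + D') = J A C D + J A C D' := by
    intro A C D D'; simp only [J, map_add, LinearMap.add_apply]; abel
  obtain ⟨a, α⟩ := A; obtain ⟨c, γ⟩ := C; obtain ⟨d, δ⟩ := D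
  have p1 : J (a, 0) (c, 0) (d, 0) = 0 := jLLL bra a c d
  have p2 : J (a, 0) (c, 0) (0, δ) = 0 := jLLf bra cocycle' a c δ
  have p3 : J (a, 0) (0, γ) (d, 0) = 0 := by
    rw [cyc, cyc]; exact jLLf bra cocycle' d a γ
  have p4 : J (a, 0) (0, γ) (0, δ) = 0 := jLff bra bra_antisym cocycle' bra_jac a γ δ
  have p5 : J (0, α) (c, 0) (d, 0) = 0 := by
    rw [cyc]; exact jLLf bra cocycle' c d α
  have p6 : J (0, α) (c, 0) (0, δ) = 0 := by
    rw [cyc]; exact jLff bra bra_antisym cocycle' bra_jac c δ α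
  have p7 : J (0, α) (0, γ) (d, 0) = 0 := by
    rw [cyc, cyc]; exact jLff bra bra_antisym cocycle' bra_jac d α γ
  have p8 : J (0, α) (0, γ) (0, δ) = 0 := jfff bra bra_jac α γ δ
  have ha : ((a, α) : L × Module.Dual k L) = (a, 0) + (0, α) := by simp
  have hc : ((c, γ) : L × Module.Dual k L) = (c, 0) + (0, γ) := by simp
  have hd : ((d, δ) : L × Module.Dual k L) = (d, 0) + (0, δ) := by simp
  rw [ha, hc, hd, addl, addm, addm, addr, addr, addr, addr,
    p1, p2, p3, p4, p5, p6, p7, p8]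
  simp

include bra_antisym in
lemma Bmap_unique (B' : (L × Module.Dual k L) →ₗ[k] (L × Module.Dual k L) →ₗ[k] (L × Module.Dual k L))
    (h0 : ∀ A : L × Module.Dual k L, B' A A = 0)
    (hL : ∀ X Y : L, B' (X, 0) (Y, 0) = (⁅X, Y⁆, (0 : Module.Dual k L)))
    (hV : ∀ f g : Module.Dual k L, B' (0, f) (0, g) = ((0 : L), bra f g))
    (hinv : ∀ A C D : L × Module.Dual k L,
      (B' A C).2 D.1 + D.2 (B' A C).1 = A.2 (B' C D).1 + (B' C D).2 A.1) :
    B' = Bmap bra := by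
  have skew : ∀ A C, B' A C = - B' C A := by
    intro A C
    have h := h0 (A + C)
    simp only [map_add, LinearMap.add_apply, h0] at h
    linear_combination (norm := module) h
  have mix1 : ∀ (x : L) (g : Module.Dual k L),
      B' (x, (0 : Module.Dual k L)) ((0 : L), g)
        = (mu bra g x, -(g ∘ₗ (adL x : L →ₗ[k] L))) := by
    intro x g
    refine Prod.ext ?_ ?_
    · apply dual_ext (k := k)
      intro h
      have hi := hinv (x, (0 : Module.Dual k L)) ((0 : L), g) ((0 : L), h)
      simp only [hV] at hi
      simpa [mu_spec] using hi
    · ext z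
      have hi := hinv (z, (0 : Module.Dual k L)) (x, (0 : Module.Dual k L)) ((0 : L), g)
      simp only [hL] at hi
      simp only [LinearMap.neg_apply, comp_adL_apply]
      rw [← lie_skew, map_neg, neg_neg]
      simpa using hi.symm
  have mix2 : ∀ (f : Module.Dual k L) (y : L),
      B' ((0 : L), f) (y, (0 : Module.Dual k L))
        = (-(mu bra f y), f ∘ₗ (adL y : L →ₗ[k] L)) := by
    intro f y
    rw [skew, mix1]
    refine Prod.ext ?_ ?_ <;> simp
  apply LinearMap.ext; intro A; apply LinearMap.ext; intro C
  obtain ⟨a, α⟩ := A; obtain ⟨c, γ⟩ := C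
  have ha : ((a, α) : L × Module.Dual k L) = (a, 0) + (0, α) := by simp
  have hc : ((c, γ) : L × Module.Dual k L) = (c, 0) + (0, γ) := by simp
  rw [ha, hc]
  simp only [map_add, LinearMap.add_apply, hL, hV, mix1, mix2,
    Bmap_LL, Bmap_LV, Bmap_VL, Bmap_VV]

end Props

end DoubleLieAux

/-- Existence and uniqueness of the double Lie algebra bracket on
`D = L ⊕ L*` extending the brackets of `L` and `L*` and making the canonical
symmetric pairing `⟨(X,f),(Y,g)⟩ = f(Y) + g(X)` invariant. -/
theorem double_lie_algebra_exists_unique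
    (k : Type*) [Field k] [CharZero k]
    (L : Type*) [LieRing L] [LieAlgebra k L] [FiniteDimensional k L]
    (bra : Module.Dual k L →ₗ[k] Module.Dual k L →ₗ[k] Module.Dual k L)
    (bra_antisym : ∀ f : Module.Dual k L, bra f f = 0)
    (bra_jacobi : ∀ f g h : Module.Dual k L,
      bra (bra f g) h + bra (bra g h) f + bra (bra h f) g = 0)
    (cocycle : ∀ (X Y : L) (f g : Module.Dual k L),
      bra f g ⁅X, Y⁆ =
          bra (f ∘ₗ (LieAlgebra.ad k L X : L →ₗ[k] L)) g Y
        + bra f (g ∘ₗ (LieAlgebra.ad k L X : L →ₗ[k] L)) Y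
        - bra (f ∘ₗ (LieAlgebra.ad k L Y : L →ₗ[k] L)) g X
        - bra f (g ∘ₗ (LieAlgebra.ad k L Y : L →ₗ[k] L)) X) :
    ∃! B : (L × Module.Dual k L) →ₗ[k] (L × Module.Dual k L) →ₗ[k] (L × Module.Dual k L),
      -- `B` is a Lie algebra bracket:
      (∀ A : L × Module.Dual k L, B A A = 0) ∧
      (∀ A C D : L × Module.Dual k L, B (B A C) D + B (B C D) A + B (B D A) C = 0) ∧
      -- (i) `L` is a Lie subalgebra:
      (∀ X Y : L, B (X, 0) (Y, 0) = (⁅X, Y⁆, (0 : Module.Dual k L))) ∧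
      -- (ii) `L*` is a Lie subalgebra with bracket `bra`:
      (∀ f g : Module.Dual k L, B (0, f) (0, g) = ((0 : L), bra f g)) ∧
      -- (iii) the pairing `⟨(X,f),(Y,g)⟩ = f Y + g X` is invariant:
      (∀ A C D : L × Module.Dual k L,
        (B A C).2 D.1 + D.2 (B A C).1 = A.2 (B C D).1 + (B C D).2 A.1) := by
  refine ⟨DoubleLieAux.Bmap bra, ⟨?_, ?_, ?_, ?_, ?_⟩, ?_⟩
  · exact DoubleLieAux.Bmap_antisym bra bra_antisym
  · exact DoubleLieAux.Bmap_jacobi bra bra_antisym cocycle bra_jacobi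
  · exact DoubleLieAux.Bmap_LL bra
  · exact DoubleLieAux.Bmap_VV bra
  · exact DoubleLieAux.Bmap_inv bra bra_antisym
  · rintro B' ⟨h0, _, hL, hV, hinv⟩
    exact DoubleLieAux.Bmap_unique bra bra_antisym B' h0 hL hV hinv
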